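/- Define the Barreto–Naehrig polynomials r₀(w) = 36w⁴ + 36w³ + 18w² + 6w + 1 and t₀(w) = 6w² + 1. Then r₀(w) divides Φ₁₂(t₀(w) - 1) = (6w²)⁴ - (6w²)² + 1 in ℤ[w]. -/

import Mathlib

open Polynomial

lemma cyc6 : Polynomial.cyclotomic 6 ℤ = X ^ 2 - X + 1 := by
  have h := Polynomial.prod_cyclotomic_eq_X_pow_sub_one (n := 6) (by norm_num) ℤ
  have hdiv : Nat.divisors 6 = {1, 2, 3, 6} := by decide
  rw [hdiv] at h
  simp [Finset.prod_insert, cyclotomic_one, cyclotomic_two, cyclotomic_three] at h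
  have hne : ((X - 1) * ((X + 1) * (X ^ 2 + X + 1)) : Polynomial ℤ) ≠ 0 := by
    intro hc
    have := congrArg (Polynomial.eval 2) hc
    simp at this
  apply mul_left_cancel₀ hne
  rw [mul_assoc, mul_assoc, cyclotomic_six, h]; ring
  
lemma cyc12 : Polynomial.cyclotomic 12 ℤ = X ^ 4 - X ^ 2 + 1 := by
  have h := Polynomial.cyclotomic_expand_eq_cyclotomic (p := 2) (n := 6)
    Nat.prime_two (by norm_num) ℤ
  have : (6 * 2 : ℕ) = 12 := by norm_num
  rw [this] at h
  rw [← h, cyc6]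
  simp only [map_sub, map_add, map_one, map_pow, expand_X]
  ring

open Polynomial in
theorem BN_r0_dvd_cyclotomic12 :
    ((36 * X ^ 4 + 36 * X ^ 3 + 18 * X ^ 2 + 6 * X + 1 : Polynomial ℤ) ∣
      (Polynomial.cyclotomic 12 ℤ).comp ((6 * X ^ 2 + 1) - 1)) ∧
    (Polynomial.cyclotomic 12 ℤ).comp ((6 * X ^ 2 + 1) - 1) =
      (6 * X ^ 2) ^ 4 - (6 * X ^ 2) ^ 2 + 1 := by
  have hc : (Polynomial.cyclotomic 12 ℤ).comp ((6 * X ^ 2 + 1) - 1) =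
      (6 * X ^ 2) ^ 4 - (6 * X ^ 2) ^ 2 + 1 := by
    rw [cyc12]
    simp only [sub_comp, add_comp, pow_comp, X_comp, one_comp, mul_comp, ofNat_comp]
    ring
  refine ⟨⟨36 * X ^ 4 - 36 * X ^ 3 + 18 * X ^ 2 - 6 * X + 1, ?_⟩, hc⟩
  rw [hc]; ring
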